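/- Let n ≥ 2 and let m be a multiple of n with m = nℓ for a prime ℓ. Consider the surjective ring homomorphism π : Z[G_m] → Z[G_n] induced by restriction of Galois groups, where G_k = Gal(Q(μ_k)/Q). If ℓ divides n, or if ℓ is odd, or if n is even, then π maps the annihilator ideal Ann_{Z[G_m]}(μ_m) (for the natural action of G_m on μ_m via a fixed generator ζ_m) onto Ann_{Z[G_n]}(μ_n). If ℓ = 2 and n is odd, then π(Ann_{Z[G_m]}(μ_m)) is a subgroup of Ann_{Z[G_n]}(μ_n) of index 2. -/

import Mathlib

open MonoidAlgebra

/-- Evaluation of the group ring `ℤ[G_m]` (with `G_m = (ℤ/m)ˣ = Gal(ℚ(μ_m)/ℚ)`) on the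
standard generator `ζ_m` of `μ_m ≅ ℤ/m`: the additive map sending `Σ a_g·g` to
`Σ a_g·(g·1)` in `ℤ/m`. -/
noncomputable def theta (m : ℕ) : MonoidAlgebra ℤ (ZMod m)ˣ →+ ZMod m :=
  Finsupp.liftAddHom (fun g : (ZMod m)ˣ => zmultiplesHom (ZMod m) (g : ZMod m)) |>.comp
    MonoidAlgebra.coeffAddEquiv.toAddMonoidHom

/-- The annihilator `Ann_{ℤ[G_m]}(μ_m)`: the kernel of the evaluation map `θ_m`,
i.e. `{r ∈ ℤ[G_m] : ζ_m^r = 1}`. -/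
noncomputable def annMu (m : ℕ) : AddSubgroup (MonoidAlgebra ℤ (ZMod m)ˣ) :=
  (theta m).ker

/-- The transition map `π^m_n : ℤ[G_m] → ℤ[G_n]` induced by the natural surjection
`G_m → G_n` for `n ∣ m`. -/
noncomputable def transMap {n m : ℕ} (h : n ∣ m) :
    MonoidAlgebra ℤ (ZMod m)ˣ →+* MonoidAlgebra ℤ (ZMod n)ˣ :=
  MonoidAlgebra.mapDomainRingHom ℤ (ZMod.unitsMap h)

lemma theta_single (m : ℕ) (g : (ZMod m)ˣ) (a : ℤ) :
    theta m (MonoidAlgebra.single g a) = a • (g : ZMod m) := by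
  rw [theta, AddMonoidHom.comp_apply]; erw [Finsupp.liftAddHom_apply_single]; rfl

lemma transMap_single {n m : ℕ} (h : n ∣ m) (g : (ZMod m)ˣ) (a : ℤ) :
    transMap h (MonoidAlgebra.single g a) = MonoidAlgebra.single (ZMod.unitsMap h g) a := by
  simp [transMap, Finsupp.mapDomain_single]

lemma coe_unitsMap {n m : ℕ} (h : n ∣ m) (g : (ZMod m)ˣ) :
    ((ZMod.unitsMap h g : ZMod n)) = ZMod.castHom h (ZMod n) (g : ZMod m) := rfl

lemma theta_comm {n m : ℕ} (h : n ∣ m) (x : MonoidAlgebra ℤ (ZMod m)ˣ) :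
    ZMod.castHom h (ZMod n) (theta m x) = theta n (transMap h x) := by
  induction x using MonoidAlgebra.induction_linear with
  | zero => simp
  | add f g hf hg => rw [map_add, map_add, map_add, map_add, hf, hg]
  | single g a =>
    rw [theta_single, transMap_single, theta_single, map_zsmul, coe_unitsMap]

lemma mem_annMu {m : ℕ} (x : MonoidAlgebra ℤ (ZMod m)ˣ) : x ∈ annMu m ↔ theta m x = 0 :=
  AddMonoidHom.mem_ker

lemma map_annMu_le {n m : ℕ} (h : n ∣ m) :
    AddSubgroup.map (transMap h).toAddMonoidHom (annMu m) ≤ annMu n := by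
  rintro _ ⟨x, hx, rfl⟩
  have hx' : theta m x = 0 := hx
  show theta n (transMap h x) = 0
  rw [← theta_comm h, hx', map_zero]

lemma transMap_surjective {n m : ℕ} [NeZero m] (h : n ∣ m) :
    Function.Surjective (transMap h) := by
  obtain ⟨s, hsec⟩ := (ZMod.unitsMap_surjective h).hasRightInverse
  intro y
  refine ⟨MonoidAlgebra.ofCoeff (Finsupp.mapDomain s y.coeff), ?_⟩
  show MonoidAlgebra.ofCoeff (Finsupp.mapDomain (ZMod.unitsMap h) (Finsupp.mapDomain s y.coeff)) = y
  rw [← Finsupp.mapDomain_comp]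
  have : ZMod.unitsMap h ∘ s = id := funext hsec
  rw [this, Finsupp.mapDomain_id]

lemma exists_zsmul {n ℓ : ℕ} (hn : 2 ≤ n) (hℓ : ℓ.Prime) (d c : ZMod (n * ℓ))
    (hd0 : ZMod.castHom (dvd_mul_right n ℓ) (ZMod n) d = 0)
    (hc0 : ZMod.castHom (dvd_mul_right n ℓ) (ZMod n) c = 0)
    (hd : d ≠ 0) : ∃ t : ℤ, t • d = c := by
  haveI : NeZero n := ⟨by omega⟩
  haveI : NeZero (n * ℓ) := ⟨Nat.mul_ne_zero (by omega) hℓ.ne_zero⟩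
  haveI : Fact ℓ.Prime := ⟨hℓ⟩
  have hdvd : ∀ x : ZMod (n * ℓ), ZMod.castHom (dvd_mul_right n ℓ) (ZMod n) x = 0 → n ∣ x.val := by
    intro x hx
    rw [ZMod.castHom_apply, ← ZMod.natCast_val, ZMod.natCast_eq_zero_iff] at hx
    exact hx
  obtain ⟨b, hb⟩ := hdvd d hd0
  obtain ⟨a, ha⟩ := hdvd c hc0
  have hbne : b ≠ 0 := by
    rintro rfl
    rw [Nat.mul_zero] at hb
    exact hd ((ZMod.val_eq_zero d).mp hb)
  have hblt : b < ℓ := by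
    have := ZMod.val_lt d
    rw [hb] at this
    exact Nat.lt_of_mul_lt_mul_left this
  have hu : (b : ZMod ℓ) ≠ 0 := by
    rw [Ne, ZMod.natCast_eq_zero_iff]
    intro hdv
    exact absurd (Nat.le_of_dvd (Nat.pos_of_ne_zero hbne) hdv) (not_le.mpr hblt)
  set v : ZMod ℓ := (a : ZMod ℓ) * (b : ZMod ℓ)⁻¹ with hv
  have hvb : v * (b : ZMod ℓ) = (a : ZMod ℓ) := by
    rw [hv, mul_assoc, inv_mul_cancel₀ hu, mul_one]
  have hmod : v.val * b ≡ a [MOD ℓ] := by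
    rw [← ZMod.natCast_eq_natCast_iff]
    push_cast
    rw [ZMod.natCast_val, ZMod.cast_id, hvb]
  refine ⟨(v.val : ℤ), ?_⟩
  have hmod2 : n * (v.val * b) ≡ n * a [MOD n * ℓ] := hmod.mul_left' n
  have hdval : d = ((n * b : ℕ) : ZMod (n * ℓ)) := by
    rw [← hb, ZMod.natCast_val, ZMod.cast_id]
  have hcval : c = ((n * a : ℕ) : ZMod (n * ℓ)) := by
    rw [← ha, ZMod.natCast_val, ZMod.cast_id]
  rw [hdval, hcval, natCast_zsmul, nsmul_eq_mul, ← Nat.cast_mul, ZMod.natCast_eq_natCast_iff]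
  calc v.val * (n * b) = n * (v.val * b) := by ring
  _ ≡ n * a [MOD n * ℓ] := hmod2

lemma unit_pair {n ℓ : ℕ} (hn : 2 ≤ n) (hℓ : ℓ.Prime) {t : ℕ} (ht0 : 0 < t) (htl : t < ℓ)
    (hcop : Nat.Coprime (1 + n * t) (n * ℓ)) :
    ∃ g h : (ZMod (n * ℓ))ˣ,
      ZMod.unitsMap (dvd_mul_right n ℓ) g = ZMod.unitsMap (dvd_mul_right n ℓ) h ∧
      (g : ZMod (n * ℓ)) ≠ (h : ZMod (n * ℓ)) := by
  haveI : NeZero n := ⟨by omega⟩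
  haveI : NeZero (n * ℓ) := ⟨Nat.mul_ne_zero (by omega) hℓ.ne_zero⟩
  refine ⟨1, ZMod.unitOfCoprime _ hcop, ?_, ?_⟩
  · apply Units.ext
    rw [coe_unitsMap, coe_unitsMap]
    have : ((ZMod.unitOfCoprime _ hcop : (ZMod (n * ℓ))ˣ) : ZMod (n * ℓ))
        = ((1 + n * t : ℕ) : ZMod (n * ℓ)) := rfl
    rw [this, Units.val_one, map_one, map_natCast]
    push_cast
    rw [ZMod.natCast_self]
    ring
  · intro hcontra
    have hval : ((ZMod.unitOfCoprime _ hcop : (ZMod (n * ℓ))ˣ) : ZMod (n * ℓ))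
        = ((1 + n * t : ℕ) : ZMod (n * ℓ)) := rfl
    have h1 : ((1 + n * t : ℕ) : ZMod (n * ℓ)) = ((1 : ℕ) : ZMod (n * ℓ)) := by
      rw [← hval, ← hcontra, Units.val_one, Nat.cast_one]
    rw [ZMod.natCast_eq_natCast_iff] at h1
    have h2 : (n * ℓ) ∣ (1 + n * t) - 1 :=
      (Nat.modEq_iff_dvd' (Nat.le_add_right 1 (n * t))).mp h1.symm
    have h2' : (n * ℓ) ∣ n * t := by simpa using h2
    have h3 : n * t < n * ℓ := (mul_lt_mul_iff_right₀ (by omega : 0 < n)).mpr htl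
    have h4 : 0 < n * t := Nat.mul_pos (by omega) ht0
    exact absurd (Nat.le_of_dvd h4 h2') (not_le.mpr h3)

lemma exists_pair {n ℓ : ℕ} (hn : 2 ≤ n) (hℓ : ℓ.Prime) (hcase : ℓ ∣ n ∨ ℓ ≠ 2 ∨ Even n) :
    ∃ g h : (ZMod (n * ℓ))ˣ,
      ZMod.unitsMap (dvd_mul_right n ℓ) g = ZMod.unitsMap (dvd_mul_right n ℓ) h ∧
      (g : ZMod (n * ℓ)) ≠ (h : ZMod (n * ℓ)) := by
  by_cases hdl : ℓ ∣ n
  · -- t = 1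
    have hcopn : Nat.Coprime (1 + n * 1) n := by
      rw [Nat.coprime_add_mul_left_left]
      exact Nat.coprime_one_left n
    have hcopl : Nat.Coprime (1 + n * 1) ℓ := Nat.Coprime.coprime_dvd_right hdl hcopn
    exact unit_pair hn hℓ one_pos hℓ.one_lt (Nat.Coprime.mul_right hcopn hcopl)
  · -- ℓ odd
    have hl2 : ℓ ≠ 2 := by
      rcases hcase with h | h | h
      · exact absurd h hdl
      · exact h
      · rintro rfl; exact hdl h.two_dvd
    have hl3 : 3 ≤ ℓ := by
      have := hℓ.two_le; omega
    have key : ∃ t : ℕ, 0 < t ∧ t < ℓ ∧ ¬ ℓ ∣ (1 + n * t) := by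
      by_cases h1 : ℓ ∣ (1 + n * 1)
      · refine ⟨2, by omega, by omega, fun h2 => ?_⟩
        have hsub := Nat.dvd_sub h2 h1
        have heq : 1 + n * 2 - (1 + n * 1) = n := by omega
        rw [heq] at hsub
        exact hdl hsub
      · exact ⟨1, one_pos, by omega, h1⟩
    obtain ⟨t, ht0, htl, hnd⟩ := key
    have hcopn : Nat.Coprime (1 + n * t) n := by
      rw [Nat.coprime_add_mul_left_left]
      exact Nat.coprime_one_left n
    have hcopl : Nat.Coprime (1 + n * t) ℓ :=
      Nat.coprime_comm.mp ((Nat.Prime.coprime_iff_not_dvd hℓ).mpr hnd)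
    exact unit_pair hn hℓ ht0 htl (Nat.Coprime.mul_right hcopn hcopl)

lemma surj_case {n ℓ : ℕ} (hn : 2 ≤ n) (hℓ : ℓ.Prime) (hcase : ℓ ∣ n ∨ ℓ ≠ 2 ∨ Even n) :
    AddSubgroup.map ((transMap (dvd_mul_right n ℓ)).toAddMonoidHom) (annMu (n * ℓ)) = annMu n := by
  haveI : NeZero (n * ℓ) := ⟨Nat.mul_ne_zero (by omega) hℓ.ne_zero⟩
  apply le_antisymm (map_annMu_le _)
  intro y hy
  have hy' : theta n y = 0 := hy
  obtain ⟨x₀, hx₀⟩ := transMap_surjective (dvd_mul_right n ℓ) y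
  obtain ⟨g, h, hgh, hne⟩ := exists_pair hn hℓ hcase
  have hd0 : ZMod.castHom (dvd_mul_right n ℓ) (ZMod n) ((g : ZMod (n * ℓ)) - h) = 0 := by
    rw [map_sub, ← coe_unitsMap, ← coe_unitsMap, hgh, sub_self]
  have hc0 : ZMod.castHom (dvd_mul_right n ℓ) (ZMod n) (theta (n * ℓ) x₀) = 0 := by
    rw [theta_comm, hx₀, hy']
  obtain ⟨t, ht⟩ := exists_zsmul hn hℓ _ _ hd0 hc0 (sub_ne_zero.mpr hne)
  refine ⟨x₀ - t • (MonoidAlgebra.single g 1 - MonoidAlgebra.single h 1), ?_, ?_⟩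
  · show theta (n * ℓ) _ = 0
    rw [map_sub, map_zsmul, map_sub, theta_single, theta_single]
    simp only [one_smul]
    rw [ht, sub_self]
  · show transMap (dvd_mul_right n ℓ) _ = y
    rw [map_sub, map_zsmul, map_sub, transMap_single, transMap_single, hgh, sub_self,
      smul_zero, sub_zero, hx₀]

lemma transMap_injective {n : ℕ} (hn : 2 ≤ n) (hodd : Odd n) :
    Function.Injective (transMap (dvd_mul_right n 2)) := by
  haveI : NeZero n := ⟨by omega⟩
  haveI : NeZero (n * 2) := ⟨by omega⟩
  have hbij : Function.Bijective (ZMod.unitsMap (dvd_mul_right n 2)) := by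
    rw [Fintype.bijective_iff_surjective_and_card]
    refine ⟨ZMod.unitsMap_surjective _, ?_⟩
    rw [ZMod.card_units_eq_totient, ZMod.card_units_eq_totient,
      Nat.totient_mul (hodd.coprime_two_right), Nat.totient_two, mul_one]
  intro x y hxy
  exact MonoidAlgebra.mapDomain_injective hbij.injective hxy

lemma part2 {n : ℕ} (hn : 2 ≤ n) (hodd : Odd n) :
    (AddSubgroup.map ((transMap (dvd_mul_right n 2)).toAddMonoidHom)
        (annMu (n * 2))).relIndex (annMu n) = 2 := by
  haveI : NeZero n := ⟨by omega⟩
  haveI : NeZero (n * 2) := ⟨by omega⟩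
  have hinj := transMap_injective hn hodd
  set H := AddSubgroup.map ((transMap (dvd_mul_right n 2)).toAddMonoidHom) (annMu (n * 2)) with hH
  have hnne : ((n : ℕ) : ZMod (n * 2)) ≠ 0 := by
    rw [Ne, ZMod.natCast_eq_zero_iff]
    intro hdvd
    have := Nat.le_of_dvd (by omega) hdvd
    omega
  -- membership characterization via unique lifts
  have hmem : ∀ (w : MonoidAlgebra ℤ (ZMod n)ˣ) (z : MonoidAlgebra ℤ (ZMod (n * 2))ˣ),
      transMap (dvd_mul_right n 2) z = w → (w ∈ H ↔ theta (n * 2) z = 0) := by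
    intro w z hz
    constructor
    · rintro ⟨x', hx', hxw⟩
      have hx'' : x' = z := hinj (by rw [hz]; exact hxw)
      rw [← hx'']
      exact hx'
    · intro h0
      exact ⟨z, h0, hz⟩
  obtain ⟨s1, hs1⟩ : ∃ s : MonoidAlgebra ℤ (ZMod n)ˣ,
      s = (n : ℕ) • MonoidAlgebra.single (1 : (ZMod n)ˣ) (1 : ℤ) := ⟨_, rfl⟩
  obtain ⟨s2, hs2⟩ : ∃ s : MonoidAlgebra ℤ (ZMod (n * 2))ˣ,
      s = (n : ℕ) • MonoidAlgebra.single (1 : (ZMod (n * 2))ˣ) (1 : ℤ) := ⟨_, rfl⟩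
  have hamem : s1 ∈ annMu n := by
    rw [mem_annMu, hs1, map_nsmul, theta_single]
    simp only [Units.val_one, one_smul]
    rw [nsmul_eq_mul, mul_one, ZMod.natCast_self]
  have hlift : transMap (dvd_mul_right n 2) s2 = s1 := by
    rw [hs1, hs2, map_nsmul, transMap_single, map_one]
  have htheta1 : theta (n * 2) s2 = ((n : ℕ) : ZMod (n * 2)) := by
    rw [hs2, map_nsmul, theta_single]
    simp only [Units.val_one, one_smul]
    rw [nsmul_eq_mul, mul_one]
  rw [AddSubgroup.relIndex, AddSubgroup.index_eq_two_iff]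
  refine ⟨⟨s1, hamem⟩, ?_⟩
  rintro ⟨b, hb⟩
  obtain ⟨x, hx⟩ := transMap_surjective (dvd_mul_right n 2) b
  have hb' : theta n b = 0 := hb
  have hcast : ZMod.castHom (dvd_mul_right n 2) (ZMod n) (theta (n * 2) x) = 0 := by
    rw [theta_comm, hx, hb']
  have hdvd : n ∣ (theta (n * 2) x).val := by
    rw [ZMod.castHom_apply, ← ZMod.natCast_val, ZMod.natCast_eq_zero_iff] at hcast
    exact hcast
  have hval : (theta (n * 2) x).val = 0 ∨ (theta (n * 2) x).val = n := by
    have hlt := ZMod.val_lt (theta (n * 2) x)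
    obtain ⟨k, hk⟩ := hdvd
    have hk2 : k < 2 := by
      by_contra hge
      push_neg at hge
      have : n * 2 ≤ n * k := Nat.mul_le_mul_left n hge
      omega
    interval_cases k <;> omega
  have hzlift : transMap (dvd_mul_right n 2) (x + s2) = b + s1 := by
    rw [map_add, hx, hlift]
  have hth : theta (n * 2) (x + s2) = theta (n * 2) x + ((n : ℕ) : ZMod (n * 2)) := by
    rw [map_add, htheta1]
  have hcoe : ((⟨b, hb⟩ + ⟨s1, hamem⟩ : annMu n) : MonoidAlgebra ℤ (ZMod n)ˣ) = b + s1 := rfl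
  rcases hval with h0 | hn'
  · refine Or.inr ⟨?_, ?_⟩
    · rw [AddSubgroup.mem_addSubgroupOf]
      exact (hmem b x hx).mpr ((ZMod.val_eq_zero _).mp h0)
    · rw [AddSubgroup.mem_addSubgroupOf, hcoe, hmem _ _ hzlift, hth,
        (ZMod.val_eq_zero _).mp h0, zero_add]
      exact hnne
  · refine Or.inl ⟨?_, ?_⟩
    · rw [AddSubgroup.mem_addSubgroupOf, hcoe, hmem _ _ hzlift, hth]
      have hc : theta (n * 2) x = ((n : ℕ) : ZMod (n * 2)) := by
        rw [← ZMod.natCast_zmod_val (theta (n * 2) x), hn']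
      rw [hc, ← Nat.cast_add]
      have hnn : n + n = n * 2 := by omega
      rw [hnn, ZMod.natCast_self]
    · rw [AddSubgroup.mem_addSubgroupOf, hmem b x hx]
      intro h0
      rw [h0] at hn'
      simp [ZMod.val_zero] at hn'
      omega

/-- for `n ≥ 2` and `m = nℓ` with `ℓ` prime, the transition map
`π : ℤ[G_m] → ℤ[G_n]` maps `Ann_{ℤ[G_m]}(μ_m)` onto `Ann_{ℤ[G_n]}(μ_n)` whenever
`ℓ ∣ n`, or `ℓ` is odd, or `n` is even; if `ℓ = 2` and `n` is odd, the image is a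
subgroup of `Ann_{ℤ[G_n]}(μ_n)` of index `2`. -/
theorem statement7 (n ℓ : ℕ) (hn : 2 ≤ n) (hℓ : ℓ.Prime) :
    ((ℓ ∣ n ∨ ℓ ≠ 2 ∨ Even n) →
      AddSubgroup.map ((transMap (dvd_mul_right n ℓ)).toAddMonoidHom)
        (annMu (n * ℓ)) = annMu n) ∧
    ((ℓ = 2 ∧ Odd n) →
      AddSubgroup.map ((transMap (dvd_mul_right n ℓ)).toAddMonoidHom)
          (annMu (n * ℓ)) ≤ annMu n ∧
      (AddSubgroup.map ((transMap (dvd_mul_right n ℓ)).toAddMonoidHom)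
          (annMu (n * ℓ))).relIndex (annMu n) = 2) := by
  constructor
  · intro hcase
    exact surj_case hn hℓ hcase
  · rintro ⟨rfl, hodd⟩
    exact ⟨map_annMu_le _, part2 hn hodd⟩
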